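/- Let b be a holomorphic map of the open unit disk 𝔻 ⊂ ℂ into itself, let N ∈ ℕ, and let f₀,…,f_N : 𝔻 → ℂ be functions. If the kernel (z,w) ↦ (1 − b(z)·conj(b(w)))/(1 − z·conj(w)) − ∑_{m=0}^{N} f_m(z)·conj(f_m(w)) is positive semidefinite on 𝔻, then the kernel (z,w) ↦ 1/(1 − z·conj(w)) − (∑_{m=0}^{N} f_m(z)·conj(f_m(w)))/(1 − b(z)·conj(b(w))) is positive semidefinite on 𝔻. -/

import Mathlib

open Complex Metric ComplexConjugate
open scoped ComplexOrder

noncomputable section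

/-- A kernel `K : X → X → ℂ` is positive semidefinite on a set `S`: for all finite
families of points of `S` and scalars, the associated quadratic form is a
nonnegative real number (using the partial order on `ℂ`). -/
def IsPSDKernelOn {X : Type*} (K : X → X → ℂ) (S : Set X) : Prop :=
  ∀ (n : ℕ) (x : Fin n → X), (∀ i, x i ∈ S) → ∀ c : Fin n → ℂ,
    0 ≤ ∑ i, ∑ j, c i * conj (c j) * K (x i) (x j)

/-- Finite-family version: if the kernel
`k^b(z,w) − ∑_{m=0}^N f_m(z)·conj(f_m(w))` is positive semidefinite, then so is
`1/(1 − z·conj w) − (∑_{m=0}^N f_m(z)·conj(f_m(w)))/(1 − b(z)·conj(b(w)))`. -/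
lemma one_sub_ne_zero_of_norm_lt_one {q : ℂ} (h : ‖q‖ < 1) : (1 : ℂ) - q ≠ 0 := by
  intro h0
  have : q = 1 := by linear_combination -h0
  simp [this] at h

theorem weighted_composition_kernel_psd_finite_family
    (b : ℂ → ℂ) (N : ℕ) (f : ℕ → ℂ → ℂ)
    (hb_holo : DifferentiableOn ℂ b (ball (0 : ℂ) 1))
    (hb_maps : ∀ z ∈ ball (0 : ℂ) 1, b z ∈ ball (0 : ℂ) 1)
    (hpos : IsPSDKernelOn
      (fun z w => (1 - b z * conj (b w)) / (1 - z * conj w) -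
        ∑ m ∈ Finset.range (N + 1), f m z * conj (f m w))
      (ball (0 : ℂ) 1)) :
    IsPSDKernelOn
      (fun z w => (1 - z * conj w)⁻¹ -
        (∑ m ∈ Finset.range (N + 1), f m z * conj (f m w)) / (1 - b z * conj (b w)))
      (ball (0 : ℂ) 1) := by
  intro n x hx c
  set B : Fin n → ℂ := fun i => b (x i) with hB
  set K : Fin n → Fin n → ℂ := fun i j =>
    (1 - B i * conj (B j)) / (1 - x i * conj (x j)) -
      ∑ m ∈ Finset.range (N + 1), f m (x i) * conj (f m (x j)) with hK
  have hxn : ∀ i, ‖x i‖ < 1 := fun i => by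
    simpa [Metric.mem_ball, dist_zero_right] using hx i
  have hBn : ∀ i, ‖B i‖ < 1 := fun i => by
    simpa [Metric.mem_ball, dist_zero_right] using hb_maps _ (hx i)
  have hqx : ∀ i j, ‖x i * conj (x j)‖ < 1 := fun i j => by
    rw [norm_mul, RCLike.norm_conj]
    nlinarith [hxn i, hxn j, norm_nonneg (x i), norm_nonneg (x j)]
  have hqB : ∀ i j, ‖B i * conj (B j)‖ < 1 := fun i j => by
    rw [norm_mul, RCLike.norm_conj]
    nlinarith [hBn i, hBn j, norm_nonneg (B i), norm_nonneg (B j)]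
  -- each geometric term is PSD
  have hterm : ∀ t : ℕ, 0 ≤ ∑ i, ∑ j,
      (c i * conj (c j) * K i j) * (B i * conj (B j)) ^ t := by
    intro t
    have := hpos n x hx (fun i => c i * B i ^ t)
    simp only at this
    refine le_of_le_of_eq this (Finset.sum_congr rfl fun i _ =>
      Finset.sum_congr rfl fun j _ => ?_)
    rw [hK]
    simp only [map_mul, map_pow]
    ring
  -- rewrite the quadratic form as a tsum
  have key : ∑ i, ∑ j, c i * conj (c j) *
      ((1 - x i * conj (x j))⁻¹ -
        (∑ m ∈ Finset.range (N + 1), f m (x i) * conj (f m (x j))) /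
          (1 - B i * conj (B j)))
      = ∑' t : ℕ, ∑ i, ∑ j, (c i * conj (c j) * K i j) * (B i * conj (B j)) ^ t := by
    have hsum : ∀ i j : Fin n,
        Summable (fun t : ℕ => (c i * conj (c j) * K i j) * (B i * conj (B j)) ^ t) :=
      fun i j => (summable_geometric_of_norm_lt_one (hqB i j)).mul_left _
    rw [Summable.tsum_finsetSum (fun i _ => summable_sum fun j _ => hsum i j)]
    refine Finset.sum_congr rfl fun i _ => ?_
    rw [Summable.tsum_finsetSum (fun j _ => hsum i j)]
    refine Finset.sum_congr rfl fun j _ => ?_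
    rw [tsum_mul_left, tsum_geometric_of_norm_lt_one (hqB i j)]
    have hx0 := one_sub_ne_zero_of_norm_lt_one (hqx i j)
    have hB0 := one_sub_ne_zero_of_norm_lt_one (hqB i j)
    rw [hK]
    field_simp
  exact (tsum_nonneg hterm).trans_eq key.symm
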